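/- Let A = [[h,g],[ḡ,h̄]] > 0 on ℂ^m ⊕ ℂ^m and B = AS with S = diag(I,-I). Define sgn(B) by holomorphic functional calculus (B has only real nonzero eigenvalues). Then a symplectic transformation R diagonalizes B (i.e. R^{-1}BR = diag(h_d, -h̄_d) with h_d > 0) if and only if sgn(B) = R S R^{-1}. -/

import Mathlib

open Matrix Polynomial
open scoped ComplexOrder

section Aux

variable {n : Type*} [Fintype n] [DecidableEq n]

private lemma my_eval_charpoly (M : Matrix n n ℂ) (t : ℂ) :
    M.charpoly.eval t = (t • (1 : Matrix n n ℂ) - M).det := by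
  rw [Matrix.charpoly, ← Polynomial.coe_evalRingHom, RingHom.map_det]
  congr 1
  ext i j
  by_cases hij : i = j <;>
    simp [charmatrix_apply, Matrix.one_apply, Matrix.diagonal_apply, hij,
      Matrix.sub_apply, Matrix.smul_apply]

private lemma my_mem_spectrum_iff {M : Matrix n n ℂ} {μ : ℂ} :
    μ ∈ spectrum ℂ M ↔ M.charpoly.eval μ = 0 := by
  rw [spectrum.mem_iff, Algebra.algebraMap_eq_smul_one, my_eval_charpoly]
  rw [← not_iff_not, not_not, Matrix.isUnit_iff_isUnit_det, isUnit_iff_ne_zero]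

private lemma my_aeval_commute {C E X : Matrix n n ℂ} (h : C * X = X * E) (p : ℂ[X]) :
    (aeval C p) * X = X * (aeval E p) := by
  have hpow : ∀ k : ℕ, C ^ k * X = X * E ^ k := by
    intro k
    induction k with
    | zero => simp
    | succ k ih =>
      rw [pow_succ, pow_succ, mul_assoc, h, ← mul_assoc, ih, mul_assoc]
  induction p using Polynomial.induction_on' with
  | add p q hp hq => simp [add_mul, mul_add, hp, hq]
  | monomial k a =>
    rw [aeval_monomial, aeval_monomial, mul_assoc, hpow, ← mul_assoc,
      Algebra.commutes, mul_assoc]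

private lemma my_sqrt_unique {C D : Matrix n n ℂ}
    (hC : ∀ μ ∈ spectrum ℂ C, ∃ r : ℝ, 0 < r ∧ μ = (r : ℂ))
    (hD : ∀ μ ∈ spectrum ℂ D, ∃ r : ℝ, 0 < r ∧ μ = (r : ℂ))
    (hsq : C * C = D * D) : C = D := by
  rcases isEmpty_or_nonempty n with hn | hn
  · ext i j; exact (IsEmpty.false i).elim
  have hX : C * (C - D) = (C - D) * (-D) := by
    have h0 : C * (C - D) - (C - D) * (-D) = 0 := by
      have : C * (C - D) - (C - D) * (-D) = C * C - D * D := by noncomm_ring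
      rw [this, hsq, sub_self]
    linear_combination (norm := noncomm_ring) h0
  set p := (-D).charpoly with hp
  have h1 : (aeval C p) * (C - D) = (C - D) * (aeval (-D) p) := my_aeval_commute hX p
  rw [Matrix.aeval_self_charpoly, mul_zero] at h1
  have hdeg : 0 < p.degree := by
    rw [hp, Matrix.charpoly_degree_eq_dim]
    exact_mod_cast Fintype.card_pos
  have hunit : IsUnit (aeval C p) := by
    rw [← spectrum.zero_notMem_iff ℂ]
    rw [spectrum.map_polynomial_aeval_of_degree_pos C p hdeg]
    rintro ⟨μ, hμ, hev⟩
    obtain ⟨r, hr, rfl⟩ := hC μ hμ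
    have hmem : (r : ℂ) ∈ spectrum ℂ (-D) := my_mem_spectrum_iff.2 hev
    rw [spectrum.mem_iff] at hmem
    have heq : algebraMap ℂ (Matrix n n ℂ) r - (-D) = -(algebraMap ℂ (Matrix n n ℂ) (-r) - D) := by
      rw [map_neg]; abel
    rw [heq, IsUnit.neg_iff, ← spectrum.mem_iff] at hmem
    obtain ⟨s, hs, hrs⟩ := hD _ hmem
    have : (-r : ℝ) = s := by exact_mod_cast hrs
    linarith
  obtain ⟨u, hu⟩ := hunit
  have hCD : C - D = 0 := by
    calc C - D = (↑u⁻¹ * ↑u) * (C - D) := by rw [u.inv_mul, one_mul]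
    _ = ↑u⁻¹ * ((aeval C p) * (C - D)) := by rw [mul_assoc, hu]
    _ = 0 := by rw [h1, mul_zero]
  exact sub_eq_zero.mp hCD

private lemma my_posdef_spectrum {M : Matrix n n ℂ} (hM : M.PosDef) :
    ∀ μ ∈ spectrum ℂ M, ∃ r : ℝ, 0 < r ∧ μ = (r : ℂ) := by
  intro μ hμ
  have hH := hM.isHermitian
  set V : Matrix n n ℂ := (hH.eigenvectorUnitary : Matrix n n ℂ) with hV
  have h1 : V * star V = 1 := (Matrix.mem_unitaryGroup_iff).mp hH.eigenvectorUnitary.2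
  have h2 : star V * V = 1 := (Matrix.mem_unitaryGroup_iff').mp hH.eigenvectorUnitary.2
  let u : (Matrix n n ℂ)ˣ := ⟨V, star V, h1, h2⟩
  have hsp : M = (u : Matrix n n ℂ) * diagonal (RCLike.ofReal ∘ hH.eigenvalues) *
      ((u⁻¹ : (Matrix n n ℂ)ˣ) : Matrix n n ℂ) := hH.spectral_theorem
  rw [hsp, spectrum.units_conjugate, spectrum_diagonal] at hμ
  obtain ⟨i, hi⟩ := hμ
  exact ⟨hH.eigenvalues i, hM.eigenvalues_pos i, hi.symm⟩

private lemma my_posdef_conj {A N : Matrix n n ℂ} (hA : A.PosDef) (hN : IsUnit N) :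
    (Nᴴ * A * N).PosDef := by
  refine Matrix.PosDef.of_dotProduct_mulVec_pos (Matrix.isHermitian_conjTranspose_mul_mul N hA.1) (fun x hx => ?_)
  have hNx : N *ᵥ x ≠ 0 := by
    intro h0
    apply hx
    have hinv : N⁻¹ *ᵥ (N *ᵥ x) = x := by
      rw [Matrix.mulVec_mulVec, Matrix.nonsing_inv_mul N ((Matrix.isUnit_iff_isUnit_det N).mp hN),
        Matrix.one_mulVec]
    rw [← hinv, h0, Matrix.mulVec_zero]
  have key : star x ⬝ᵥ ((Nᴴ * A * N) *ᵥ x) = star (N *ᵥ x) ⬝ᵥ (A *ᵥ (N *ᵥ x)) := by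
    rw [← Matrix.mulVec_mulVec, ← Matrix.mulVec_mulVec, Matrix.dotProduct_mulVec (star x),
      ← Matrix.star_mulVec]
  rw [key]
  exact hA.dotProduct_mulVec_pos hNx

variable {l : Type*} [Fintype l] [DecidableEq l]

private lemma my_star_sum_elim (x : l → ℂ) (y : n → ℂ) :
    star (Sum.elim x y) = Sum.elim (star x) (star y) := by
  funext i; cases i <;> rfl

private lemma my_posdef_fromBlocks {a : Matrix l l ℂ} {d : Matrix n n ℂ}
    (ha : a.PosDef) (hd : d.PosDef) : (fromBlocks a 0 0 d).PosDef := by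
  refine Matrix.PosDef.of_dotProduct_mulVec_pos ?_ ?_
  · rw [Matrix.IsHermitian, Matrix.fromBlocks_conjTranspose]
    simp [ha.1.eq, hd.1.eq]
  · intro x hx
    have hxe : x = Sum.elim (x ∘ Sum.inl) (x ∘ Sum.inr) := (Sum.elim_comp_inl_inr x).symm
    have hquad : star x ⬝ᵥ ((fromBlocks a 0 0 d) *ᵥ x) =
        star (x ∘ Sum.inl) ⬝ᵥ (a *ᵥ (x ∘ Sum.inl)) +
        star (x ∘ Sum.inr) ⬝ᵥ (d *ᵥ (x ∘ Sum.inr)) := by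
      rw [Matrix.fromBlocks_mulVec]
      conv_lhs => rw [hxe]
      rw [my_star_sum_elim, sumElim_dotProduct_sumElim]
      simp
    rw [hquad]
    have h1 : (x ∘ Sum.inl) ≠ 0 ∨ (x ∘ Sum.inr) ≠ 0 := by
      by_contra hcon
      push_neg at hcon
      apply hx
      rw [hxe, hcon.1, hcon.2]
      funext i; cases i <;> rfl
    rcases h1 with h1 | h1
    · exact add_pos_of_pos_of_nonneg (ha.dotProduct_mulVec_pos h1) (hd.posSemidef.dotProduct_mulVec_nonneg _)
    · exact add_pos_of_nonneg_of_pos (ha.posSemidef.dotProduct_mulVec_nonneg _) (hd.dotProduct_mulVec_pos h1)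

private lemma my_posdef_block₁₁ {a : Matrix l l ℂ} {d : Matrix n n ℂ}
    (h : (fromBlocks a 0 0 d).PosDef) : a.PosDef := by
  refine Matrix.PosDef.of_dotProduct_mulVec_pos ?_ ?_
  · have h1 := h.1
    rw [Matrix.IsHermitian, Matrix.fromBlocks_conjTranspose] at h1
    have h2 := congrArg Matrix.toBlocks₁₁ h1
    exact (by simpa [Matrix.toBlocks_fromBlocks₁₁] using h2 : aᴴ = a)
  · intro x hx
    have hxs : (Sum.elim x (0 : n → ℂ)) ≠ 0 := by
      intro h0
      apply hx
      funext i
      exact congrFun h0 (Sum.inl i)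
    have h2 := h.dotProduct_mulVec_pos hxs
    rw [Matrix.fromBlocks_mulVec] at h2
    simpa [my_star_sum_elim, sumElim_dotProduct_sumElim] using h2

private lemma my_posdef_block₂₂ {a : Matrix l l ℂ} {d : Matrix n n ℂ}
    (h : (fromBlocks a 0 0 d).PosDef) : d.PosDef := by
  refine Matrix.PosDef.of_dotProduct_mulVec_pos ?_ ?_
  · have h1 := h.1
    rw [Matrix.IsHermitian, Matrix.fromBlocks_conjTranspose] at h1
    have h2 := congrArg Matrix.toBlocks₂₂ h1
    exact (by simpa [Matrix.toBlocks_fromBlocks₂₂] using h2 : dᴴ = d)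
  · intro x hx
    have hxs : (Sum.elim (0 : l → ℂ) x) ≠ 0 := by
      intro h0
      apply hx
      funext i
      exact congrFun h0 (Sum.inr i)
    have h2 := h.dotProduct_mulVec_pos hxs
    rw [Matrix.fromBlocks_mulVec] at h2
    simpa [my_star_sum_elim, sumElim_dotProduct_sumElim] using h2

private lemma my_eq_neg_self {X : Matrix l n ℂ} (h : X = -X) : X = 0 := by
  have h2 : (2 : ℂ) • X = 0 := by
    rw [two_smul]
    nth_rewrite 1 [h]
    rw [neg_add_cancel]
  rcases smul_eq_zero.mp h2 with h3 | h3
  · exact absurd h3 two_ne_zero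
  · exact h3

end Aux

theorem diagonalizes_iff_sgn_eq {m : ℕ}
    (h g : Matrix (Fin m) (Fin m) ℂ)
    (hh : hᴴ = h) (hg : gᵀ = g)
    (S A B sgnB : Matrix (Fin m ⊕ Fin m) (Fin m ⊕ Fin m) ℂ)
    (hS : S = Matrix.fromBlocks 1 0 0 (-1))
    (hA : A = Matrix.fromBlocks h g (g.map (starRingEnd ℂ)) (h.map (starRingEnd ℂ)))
    (hApos : A.PosDef)
    (hB : B = A * S)
    -- characterization of `sgn(B)` via holomorphic functional calculus:
    (hsgn_comm : sgnB * B = B * sgnB)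
    (hsgn_sq : sgnB * sgnB = 1)
    (hsgn_pos : ∀ μ ∈ spectrum ℂ (sgnB * B), ∃ r : ℝ, 0 < r ∧ μ = (r : ℂ))
    (rp rq : Matrix (Fin m) (Fin m) ℂ)
    (R : Matrix (Fin m ⊕ Fin m) (Fin m ⊕ Fin m) ℂ)
    (hRJreal : R = Matrix.fromBlocks rp rq (rq.map (starRingEnd ℂ)) (rp.map (starRingEnd ℂ)))
    (hRsymp : Rᴴ * S * R = S) :
    (∃ hd : Matrix (Fin m) (Fin m) ℂ, hd.PosDef ∧
        R⁻¹ * B * R = Matrix.fromBlocks hd 0 0 (-(hd.map (starRingEnd ℂ)))) ↔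
      sgnB = R * S * R⁻¹ := by
  -- notation
  set σ := starRingEnd ℂ with hσ
  -- basic facts about S
  have hS2 : S * S = 1 := by
    rw [hS, Matrix.fromBlocks_multiply, ← Matrix.fromBlocks_one]
    norm_num
  have hSH : Sᴴ = S := by
    rw [hS, Matrix.fromBlocks_conjTranspose]
    simp
  have hSunit : IsUnit S := (Matrix.isUnit_iff_isUnit_det _).mpr (Matrix.isUnit_det_of_left_inverse hS2)
  -- basic facts about R
  have hRleft : (S * Rᴴ * S) * R = 1 := by
    have e : S * Rᴴ * S * R = S * (Rᴴ * S * R) := by simp only [mul_assoc]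
    rw [e, hRsymp, hS2]
  have hRunit : IsUnit R := (Matrix.isUnit_iff_isUnit_det _).mpr (Matrix.isUnit_det_of_left_inverse hRleft)
  have hRdet : IsUnit R.det := (Matrix.isUnit_iff_isUnit_det R).mp hRunit
  have hRinv_eq : R⁻¹ = S * Rᴴ * S := Matrix.inv_eq_left_inv hRleft
  have hRR : R * R⁻¹ = 1 := Matrix.mul_nonsing_inv R hRdet
  have hR'R : R⁻¹ * R = 1 := Matrix.nonsing_inv_mul R hRdet
  have hc1 : ∀ X : Matrix (Fin m ⊕ Fin m) (Fin m ⊕ Fin m) ℂ, R⁻¹ * (R * X) = X := fun X => by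
    rw [← mul_assoc, hR'R, one_mul]
  have hc2 : ∀ X : Matrix (Fin m ⊕ Fin m) (Fin m ⊕ Fin m) ℂ, R * (R⁻¹ * X) = X := fun X => by
    rw [← mul_assoc, hRR, one_mul]
  -- basic facts about B
  have hAunit : IsUnit A := hApos.isUnit
  have hBunit : IsUnit B := by rw [hB]; exact hAunit.mul hSunit
  have hBB : B * B⁻¹ = 1 := Matrix.mul_nonsing_inv B ((Matrix.isUnit_iff_isUnit_det B).mp hBunit)
  constructor
  · -- forward direction
    rintro ⟨hd, hdpos, hdiag⟩
    have hhd : hdᴴ = hd := hdpos.1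
    have hhdmap : hd.map σ = hdᵀ := by
      ext i j
      have h2 := congrFun (congrFun hhd j) i
      simp only [Matrix.conjTranspose_apply] at h2
      simpa [Matrix.map_apply] using h2
    have hdTpos : (hd.map σ).PosDef := by rw [hhdmap]; exact hdpos.transpose
    set Dm : Matrix (Fin m ⊕ Fin m) (Fin m ⊕ Fin m) ℂ := Matrix.fromBlocks hd 0 0 (-(hd.map σ))
      with hDm
    set SDm : Matrix (Fin m ⊕ Fin m) (Fin m ⊕ Fin m) ℂ := Matrix.fromBlocks hd 0 0 (hd.map σ)
      with hSDm
    have hSD : S * Dm = SDm := by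
      rw [hS, hDm, hSDm, Matrix.fromBlocks_multiply]
      norm_num
    have hDS : Dm * S = SDm := by
      rw [hS, hDm, hSDm, Matrix.fromBlocks_multiply]
      norm_num
    have hSDpos : SDm.PosDef := my_posdef_fromBlocks hdpos hdTpos
    have hBRD : B = R * Dm * R⁻¹ := by
      have e0 : R * (R⁻¹ * B * R) * R⁻¹ = B := by
        have e : R * (R⁻¹ * B * R) * R⁻¹ = (R * R⁻¹) * B * (R * R⁻¹) := by
          simp only [mul_assoc]
        rw [e, hRR, one_mul, mul_one]
      rw [← e0, hdiag]
    set Q : Matrix (Fin m ⊕ Fin m) (Fin m ⊕ Fin m) ℂ := R * S * R⁻¹ with hQ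
    have hcommSD : S * Dm = Dm * S := by rw [hSD, hDS]
    have hQcomm : Q * B = B * Q := by
      rw [hQ, hBRD]
      simp only [mul_assoc, hc1]
      rw [← mul_assoc S Dm, hcommSD, mul_assoc]
    have hQ2 : Q * Q = 1 := by
      rw [hQ]
      simp only [mul_assoc, hc1]
      rw [← mul_assoc S S, hS2, one_mul, hRR]
    have hQBval : Q * B = R * SDm * R⁻¹ := by
      rw [hQ, hBRD]
      simp only [mul_assoc, hc1]
      rw [← mul_assoc S Dm, hSD]
    have hspec : ∀ μ ∈ spectrum ℂ (Q * B), ∃ r : ℝ, 0 < r ∧ μ = (r : ℂ) := by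
      intro μ hμ
      rw [hQBval] at hμ
      have e : R * SDm * R⁻¹ = (hRunit.unit : Matrix (Fin m ⊕ Fin m) (Fin m ⊕ Fin m) ℂ) * SDm *
          ((hRunit.unit⁻¹ : (Matrix (Fin m ⊕ Fin m) (Fin m ⊕ Fin m) ℂ)ˣ) :
            Matrix (Fin m ⊕ Fin m) (Fin m ⊕ Fin m) ℂ) := by
        rw [Matrix.coe_units_inv, hRunit.unit_spec]
      rw [e, spectrum.units_conjugate] at hμ
      exact my_posdef_spectrum hSDpos μ hμ
    have hCsq : (sgnB * B) * (sgnB * B) = B * B := by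
      calc (sgnB * B) * (sgnB * B) = sgnB * (B * sgnB) * B := by simp only [mul_assoc]
      _ = sgnB * (sgnB * B) * B := by rw [hsgn_comm]
      _ = (sgnB * sgnB) * (B * B) := by simp only [mul_assoc]
      _ = B * B := by rw [hsgn_sq, one_mul]
    have hQsq : (Q * B) * (Q * B) = B * B := by
      calc (Q * B) * (Q * B) = Q * (B * Q) * B := by simp only [mul_assoc]
      _ = Q * (Q * B) * B := by rw [hQcomm]
      _ = (Q * Q) * (B * B) := by simp only [mul_assoc]
      _ = B * B := by rw [hQ2, one_mul]
    have heq : sgnB * B = Q * B := my_sqrt_unique hsgn_pos hspec (by rw [hCsq, hQsq])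
    calc sgnB = sgnB * B * B⁻¹ := by rw [mul_assoc, hBB, mul_one]
    _ = Q * B * B⁻¹ := by rw [heq]
    _ = Q := by rw [mul_assoc, hBB, mul_one]
  · -- reverse direction
    intro hQeq
    -- commutation of S with R⁻¹ * B * R
    have hcommQ : R * S * R⁻¹ * B = B * (R * S * R⁻¹) := by
      rw [← hQeq]; exact hsgn_comm
    have hSB' : S * (R⁻¹ * B * R) = (R⁻¹ * B * R) * S := by
      have h0 := congrArg (fun X => R⁻¹ * X * R) hcommQ
      simp only [mul_assoc, hc1, hc2, hR'R, mul_one] at h0 ⊢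
      exact h0
    -- block structure
    set a := (R⁻¹ * B * R).toBlocks₁₁ with ha
    set b := (R⁻¹ * B * R).toBlocks₁₂ with hbdef
    set c := (R⁻¹ * B * R).toBlocks₂₁ with hcdef
    set d := (R⁻¹ * B * R).toBlocks₂₂ with hddef
    have hfb : R⁻¹ * B * R = Matrix.fromBlocks a b c d := (Matrix.fromBlocks_toBlocks _).symm
    have hblockeq : Matrix.fromBlocks a b (-c) (-d) = Matrix.fromBlocks a (-b) c (-d) := by
      have e1 : S * (R⁻¹ * B * R) = Matrix.fromBlocks a b (-c) (-d) := by
        rw [hfb, hS, Matrix.fromBlocks_multiply]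
        norm_num
      have e2 : (R⁻¹ * B * R) * S = Matrix.fromBlocks a (-b) c (-d) := by
        rw [hfb, hS, Matrix.fromBlocks_multiply]
        norm_num
      rw [← e1, ← e2, hSB']
    have hb0 : b = 0 := by
      have h12 := congrArg Matrix.toBlocks₁₂ hblockeq
      simp only [Matrix.toBlocks_fromBlocks₁₂] at h12
      exact my_eq_neg_self h12
    have hc0 : c = 0 := by
      have h21 := congrArg Matrix.toBlocks₂₁ hblockeq
      simp only [Matrix.toBlocks_fromBlocks₂₁] at h21
      exact my_eq_neg_self h21.symm
    have hfb0 : R⁻¹ * B * R = Matrix.fromBlocks a 0 0 d := by rw [hfb, hb0, hc0]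
    -- positivity of (R⁻¹ B R) S
    have hNunit : IsUnit (S * R * S) := (hSunit.mul hRunit).mul hSunit
    have hNH : (S * R * S)ᴴ = S * Rᴴ * S := by
      simp only [Matrix.conjTranspose_mul, hSH]
      simp only [mul_assoc]
    have hBS : (R⁻¹ * B * R) * S = (S * R * S)ᴴ * A * (S * R * S) := by
      rw [hNH, hRinv_eq, hB]
      simp only [mul_assoc]
    have hBSpos : ((R⁻¹ * B * R) * S).PosDef := by
      rw [hBS]; exact my_posdef_conj hApos hNunit
    have hblocksS : (R⁻¹ * B * R) * S = Matrix.fromBlocks a 0 0 (-d) := by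
      rw [hfb0, hS, Matrix.fromBlocks_multiply]
      norm_num
    have hapos : a.PosDef := my_posdef_block₁₁ (hblocksS ▸ hBSpos)
    -- J-reality
    set J : Matrix (Fin m ⊕ Fin m) (Fin m ⊕ Fin m) ℂ := Matrix.fromBlocks 0 1 1 0 with hJ
    have hJ2 : J * J = 1 := by
      rw [hJ, Matrix.fromBlocks_multiply, ← Matrix.fromBlocks_one]
      norm_num
    have hcJ : ∀ X : Matrix (Fin m ⊕ Fin m) (Fin m ⊕ Fin m) ℂ, J * (J * X) = X := fun X => by
      rw [← mul_assoc, hJ2, one_mul]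
    have hJconj : ∀ x y z w : Matrix (Fin m) (Fin m) ℂ,
        J * (Matrix.fromBlocks x y z w) * J = Matrix.fromBlocks w z y x := by
      intro x y z w
      rw [hJ, Matrix.fromBlocks_multiply, Matrix.fromBlocks_multiply]
      norm_num
    have hBblock : B = Matrix.fromBlocks h (-g) (g.map σ) (-(h.map σ)) := by
      rw [hB, hA, hS, Matrix.fromBlocks_multiply]
      norm_num
    have hBm : B.map σ = Matrix.fromBlocks (h.map σ) (-(g.map σ)) g (-h) := by
      rw [hBblock]
      ext i j
      rcases i with i | i <;> rcases j with j | j <;>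
        simp [Matrix.map_apply, Matrix.fromBlocks]
    have hBmapJ : J * (B.map σ) * J = -B := by
      rw [hBm, hJconj, hBblock, Matrix.fromBlocks_neg, neg_neg, neg_neg]
    have hRm : R.map σ = Matrix.fromBlocks (rp.map σ) (rq.map σ) rq rp := by
      rw [hRJreal]
      ext i j
      rcases i with i | i <;> rcases j with j | j <;>
        simp [Matrix.map_apply, Matrix.fromBlocks]
    have hRmapJ : J * (R.map σ) * J = R := by
      rw [hRm, hJconj, hRJreal]
    have hmapRR : (R.map σ) * (R⁻¹.map σ) = 1 := by
      rw [← Matrix.map_mul, hRR, Matrix.map_one _ (map_zero σ) (map_one σ)]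
    have hJRinv : J * (R⁻¹.map σ) * J = R⁻¹ := by
      have hmul : (J * (R.map σ) * J) * (J * (R⁻¹.map σ) * J) = 1 := by
        simp only [mul_assoc, hcJ]
        rw [show R.map σ * (R⁻¹.map σ * J) = (R.map σ * R⁻¹.map σ) * J from
          (mul_assoc _ _ _).symm, hmapRR, one_mul, hJ2]
      have : R⁻¹ = J * (R⁻¹.map σ) * J := by
        calc R⁻¹ = (J * (R.map σ) * J)⁻¹ := by rw [hRmapJ]
        _ = J * (R⁻¹.map σ) * J := Matrix.inv_eq_right_inv hmul
      exact this.symm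
    have hkey : ∀ X Y Z : Matrix (Fin m ⊕ Fin m) (Fin m ⊕ Fin m) ℂ,
        J * (X * Y * Z) * J = (J * X * J) * ((J * Y * J) * (J * Z * J)) := by
      intro X Y Z
      simp only [mul_assoc, hcJ]
    have hJB'J : J * ((R⁻¹ * B * R).map σ) * J = -(R⁻¹ * B * R) := by
      rw [Matrix.map_mul, Matrix.map_mul, hkey, hJRinv, hBmapJ, hRmapJ]
      simp only [mul_assoc, neg_mul, mul_neg]
    have hB'map : (R⁻¹ * B * R).map σ = Matrix.fromBlocks (a.map σ) 0 0 (d.map σ) := by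
      rw [hfb0]
      ext i j
      rcases i with i | i <;> rcases j with j | j <;>
        simp [Matrix.map_apply, Matrix.fromBlocks]
    have hfinal : Matrix.fromBlocks (d.map σ) 0 0 (a.map σ) =
        Matrix.fromBlocks (-a) 0 0 (-d) := by
      have e1 : J * ((R⁻¹ * B * R).map σ) * J = Matrix.fromBlocks (d.map σ) 0 0 (a.map σ) := by
        rw [hB'map, hJconj]
      have e2 : -(R⁻¹ * B * R) = Matrix.fromBlocks (-a) 0 0 (-d) := by
        rw [hfb0, Matrix.fromBlocks_neg, neg_zero]
      rw [← e1, ← e2, hJB'J]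
    have h22 : a.map σ = -d := by
      have := congrArg Matrix.toBlocks₂₂ hfinal
      simpa only [Matrix.toBlocks_fromBlocks₂₂] using this
    have hd_eq : d = -(a.map σ) := by rw [h22, neg_neg]
    exact ⟨a, hapos, by rw [hfb0, hd_eq]⟩
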